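/- Let ω: ℝ → (0,∞) be differentiable at a point k, and let γ > 2ω(k) hold on a neighbourhood of k. Define Ω(k) := (γ/2)√(1 − (2ω(k)/γ)²) and Â_t(k) := exp(−t M̂_γ(k)) with M̂_γ(k) = [[0, ω(k)²], [−1, γ]], so that Â_t(k)^{22} = (e^{−γt/2}/Ω)(−(γ/2) sinh(Ωt) + Ω cosh(Ωt)) and Â_t(k)^{21} = (e^{−γt/2}/Ω) sinh(Ωt). Then 2γ ∫₀^∞ dt Â_t(k)^{22} ∂_k Â_t(k)^{21} = ∂_k ω(k) / (γ ω(k)). -/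

import Mathlib

set_option maxHeartbeats 1000000

open Matrix MeasureTheory Real Set

/-- The Fourier symbol `M̂_γ(k) = [[0, ω(k)²], [−1, γ]]`. -/
noncomputable def Mhat (ω : ℝ → ℝ) (γ : ℝ) (k : ℝ) : Matrix (Fin 2) (Fin 2) ℝ :=
  !![0, (ω k) ^ 2; -1, γ]

/-- `Â_t(k) = exp(−t M̂_γ(k))`. -/
noncomputable def Ahat (ω : ℝ → ℝ) (γ : ℝ) (t k : ℝ) : Matrix (Fin 2) (Fin 2) ℝ :=
  NormedSpace.exp (-(t • Mhat ω γ k))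

lemma Ahat_eq (ω : ℝ → ℝ) (γ t x b : ℝ) (hb : b ≠ 0)
    (hb2 : b ^ 2 = γ ^ 2 / 4 - (ω x) ^ 2) :
    Ahat ω γ t x = Real.exp (-(γ * t) / 2) •
      (Real.cosh (b * t) • (1 : Matrix (Fin 2) (Fin 2) ℝ)
        + (Real.sinh (b * t) / b) • !![γ / 2, -(ω x) ^ 2; 1, -(γ / 2)]) := by
  have hw2 : (ω x) ^ 2 = γ ^ 2 / 4 - b ^ 2 := by linarith
  set P : Matrix (Fin 2) (Fin 2) ℝ := !![γ/2 - b, γ/2 + b; 1, 1] with hP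
  set Q : Matrix (Fin 2) (Fin 2) ℝ := (-(2*b))⁻¹ • !![1, -(γ/2 + b); -1, γ/2 - b] with hQ
  set D : Matrix (Fin 2) (Fin 2) ℝ :=
    Matrix.diagonal (![-(t*(γ/2+b)), -(t*(γ/2-b))] : Fin 2 → ℝ) with hDdef
  have hD : D = !![-(t*(γ/2+b)), 0; 0, -(t*(γ/2-b))] := by
    ext i j; fin_cases i <;> fin_cases j <;> simp [hDdef, Matrix.diagonal_apply]
  have hPQ : P * Q = 1 := by
    ext i j
    fin_cases i <;> fin_cases j <;>
      simp [hP, hQ, Matrix.mul_apply, Fin.sum_univ_succ] <;> field_simp <;> ring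
  have hQP : Q * P = 1 := by
    ext i j
    fin_cases i <;> fin_cases j <;>
      simp [hP, hQ, Matrix.mul_apply, Fin.sum_univ_succ] <;> field_simp <;> ring
  set U : (Matrix (Fin 2) (Fin 2) ℝ)ˣ := ⟨P, Q, hPQ, hQP⟩ with hU
  have key : (-(t • Mhat ω γ x)) * P = P * D := by
    ext i j
    fin_cases i <;> fin_cases j <;>
      simp [hP, hD, Mhat, Matrix.mul_apply, Fin.sum_univ_succ, hw2] <;> ring
  have hM : -(t • Mhat ω γ x) = (U : Matrix (Fin 2) (Fin 2) ℝ) * D * ((U⁻¹ : _ˣ) : Matrix (Fin 2) (Fin 2) ℝ) := by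
    show -(t • Mhat ω γ x) = P * D * Q
    rw [← key, Matrix.mul_assoc, hPQ, Matrix.mul_one]
  rw [Ahat, hM, Matrix.exp_units_conj, hDdef, Matrix.exp_diagonal]
  have hexp : ∀ r : ℝ, NormedSpace.exp r = Real.exp r := by
    intro r; rw [Real.exp_eq_exp_ℝ]
  show P * Matrix.diagonal _ * Q = _
  have e1 : NormedSpace.exp (![-(t*(γ/2+b)), -(t*(γ/2-b))] : Fin 2 → ℝ)
      = ![Real.exp (-(γ*t)/2) * (Real.exp (b*t))⁻¹, Real.exp (-(γ*t)/2) * Real.exp (b*t)] := by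
    rw [Pi.exp_def]
    funext i
    rw [hexp]
    fin_cases i <;> simp
    · rw [← Real.exp_neg, ← Real.exp_add]; congr 1; ring
    · rw [← Real.exp_add]; congr 1; ring
  rw [e1]
  have hDe : Matrix.diagonal (![Real.exp (-(γ*t)/2) * (Real.exp (b*t))⁻¹,
      Real.exp (-(γ*t)/2) * Real.exp (b*t)] : Fin 2 → ℝ)
      = !![Real.exp (-(γ*t)/2) * (Real.exp (b*t))⁻¹, 0; 0, Real.exp (-(γ*t)/2) * Real.exp (b*t)] := by
    ext i j; fin_cases i <;> fin_cases j <;> simp [Matrix.diagonal_apply]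
  rw [hDe]
  set u := Real.exp (-(γ*t)/2) with hu
  set v := Real.exp (b*t) with hv
  have hvne : v ≠ 0 := Real.exp_ne_zero _
  have hsinh : Real.sinh (b*t) = (v - v⁻¹)/2 := by
    rw [Real.sinh_eq, hv, Real.exp_neg]
  have hcosh : Real.cosh (b*t) = (v + v⁻¹)/2 := by
    rw [Real.cosh_eq, hv, Real.exp_neg]
  ext i j
  fin_cases i <;> fin_cases j <;>
    simp [hP, hQ, Matrix.mul_apply, Fin.sum_univ_succ, Matrix.one_apply, hsinh, hcosh, hw2] <;>
    field_simp <;> ring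

lemma Omega_facts (ω : ℝ → ℝ) (γ x : ℝ) (hw : 0 < ω x) (hlt : 2 * ω x < γ)
    (v : ℝ) (hv : v = γ/2 * Real.sqrt (1 - (2 * ω x / γ)^2)) :
    0 < v ∧ v^2 = γ^2/4 - (ω x)^2 := by
  have hγ0 : 0 < γ := lt_trans (by positivity) hlt
  have h0 : 0 < 2 * ω x / γ := by positivity
  have h1' : 2 * ω x / γ < 1 := (div_lt_one hγ0).2 hlt
  have hpos' : 0 < 1 - (2 * ω x / γ)^2 := by nlinarith
  constructor
  · rw [hv]; exact mul_pos (by linarith) (Real.sqrt_pos.2 hpos')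
  · rw [hv, mul_pow, sq_sqrt hpos'.le]
    field_simp
    ring

lemma aux_hd1 (c : ℝ) (t : ℝ) : HasDerivAt (fun t : ℝ => rexp (-(c*t))) (rexp (-(c*t)) * -c) t := by
  have h1 : HasDerivAt (fun t : ℝ => -(c*t)) (-c) t := by
    simpa [neg_mul] using ((hasDerivAt_id t).const_mul (-c))
  exact h1.exp

lemma tendsto_cexp (c : ℝ) (hc : 0 < c) :
    Filter.Tendsto (fun t : ℝ => rexp (-(c*t))) Filter.atTop (nhds 0) :=
  tendsto_exp_neg_atTop_nhds_zero.comp (Filter.tendsto_id.const_mul_atTop hc)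

lemma tendsto_tcexp (c : ℝ) (hc : 0 < c) :
    Filter.Tendsto (fun t : ℝ => t * rexp (-(c*t))) Filter.atTop (nhds 0) := by
  have h := (tendsto_pow_mul_exp_neg_atTop_nhds_zero 1).comp
    (Filter.tendsto_id.const_mul_atTop hc (f := fun t : ℝ => t))
  have h2 := h.const_mul (1/c)
  simp only [Function.comp] at h2
  convert h2 using 2 with t
  · field_simp
  · simp

lemma integral_exp_Ioi (c : ℝ) (hc : 0 < c) :
    IntegrableOn (fun t : ℝ => rexp (-(c*t))) (Ioi (0:ℝ)) ∧
    ∫ t in Ioi (0:ℝ), rexp (-(c*t)) = 1/c := by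
  have hderiv : ∀ t ∈ Ici (0:ℝ), HasDerivAt (fun t : ℝ => -(rexp (-(c*t))/c)) (rexp (-(c*t))) t := by
    intro t _
    have := ((aux_hd1 c t).div_const c).neg
    refine this.congr_deriv ?_
    field_simp
  have hpos : ∀ t ∈ Ioi (0:ℝ), 0 ≤ rexp (-(c*t)) := fun t _ => (Real.exp_pos _).le
  have htend : Filter.Tendsto (fun t : ℝ => -(rexp (-(c*t))/c)) Filter.atTop (nhds 0) := by
    have := ((tendsto_cexp c hc).div_const c).neg
    simpa using this
  refine ⟨integrableOn_Ioi_deriv_of_nonneg' hderiv hpos htend, ?_⟩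
  rw [integral_Ioi_of_hasDerivAt_of_nonneg' hderiv hpos htend]
  simp

lemma integral_texp_Ioi (c : ℝ) (hc : 0 < c) :
    IntegrableOn (fun t : ℝ => t * rexp (-(c*t))) (Ioi (0:ℝ)) ∧
    ∫ t in Ioi (0:ℝ), t * rexp (-(c*t)) = 1/c^2 := by
  have hderiv : ∀ t ∈ Ici (0:ℝ),
      HasDerivAt (fun t : ℝ => -((t/c + 1/c^2) * rexp (-(c*t)))) (t * rexp (-(c*t))) t := by
    intro t _
    have h3 : HasDerivAt (fun t : ℝ => t/c + 1/c^2) (1/c) t :=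
      ((hasDerivAt_id t).div_const c).add_const _
    have := (h3.mul (aux_hd1 c t)).neg
    refine this.congr_deriv ?_
    field_simp
    ring
  have hpos : ∀ t ∈ Ioi (0:ℝ), 0 ≤ t * rexp (-(c*t)) := fun t ht =>
    mul_nonneg (le_of_lt ht) (Real.exp_pos _).le
  have htend : Filter.Tendsto (fun t : ℝ => -((t/c + 1/c^2) * rexp (-(c*t)))) Filter.atTop (nhds 0) := by
    have h1 := ((tendsto_tcexp c hc).div_const c).add ((tendsto_cexp c hc).const_mul (1/c^2))
    have h2 := h1.neg
    simp only [zero_div, zero_add, mul_zero, neg_zero, add_zero] at h2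
    convert h2 using 2 with t
    ring
  refine ⟨integrableOn_Ioi_deriv_of_nonneg' hderiv hpos htend, ?_⟩
  rw [integral_Ioi_of_hasDerivAt_of_nonneg' hderiv hpos htend]
  field_simp
  simp

lemma integral_linexp_Ioi (c α β : ℝ) (hc : 0 < c) :
    IntegrableOn (fun t : ℝ => (α + β * t) * rexp (-(c*t))) (Ioi (0:ℝ)) ∧
    ∫ t in Ioi (0:ℝ), (α + β * t) * rexp (-(c*t)) = α/c + β/c^2 := by
  have h1 := integral_exp_Ioi c hc
  have h2 := integral_texp_Ioi c hc
  have heq : (fun t : ℝ => (α + β * t) * rexp (-(c*t)))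
      = fun t : ℝ => α * rexp (-(c*t)) + β * (t * rexp (-(c*t))) := by
    funext t; ring
  constructor
  · rw [heq]; exact ((h1.1.const_mul α).add (h2.1.const_mul β))
  · rw [heq, integral_add (h1.1.const_mul α) (h2.1.const_mul β),
      MeasureTheory.integral_const_mul, MeasureTheory.integral_const_mul, h1.2, h2.2]
    ring

theorem q_of_k_explicit
    (ω : ℝ → ℝ) (γ : ℝ) (k : ℝ)
    (hpos : ∀ x, 0 < ω x)
    (hdiff : DifferentiableAt ℝ ω k)
    (hγ : ∀ᶠ x in nhds k, 2 * ω x < γ)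
    (Ω : ℝ → ℝ) (hΩ : ∀ x, Ω x = (γ / 2) * Real.sqrt (1 - (2 * ω x / γ) ^ 2)) :
    (∀ t : ℝ, 0 ≤ t →
        Ahat ω γ t k 1 1
          = (Real.exp (-(γ * t) / 2) / Ω k) *
              (-(γ / 2) * Real.sinh (Ω k * t) + Ω k * Real.cosh (Ω k * t)) ∧
        Ahat ω γ t k 1 0
          = (Real.exp (-(γ * t) / 2) / Ω k) * Real.sinh (Ω k * t)) ∧
    2 * γ * ∫ t in Set.Ioi (0:ℝ),
        Ahat ω γ t k 1 1 * deriv (fun x => Ahat ω γ t x 1 0) k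
      = deriv ω k / (γ * ω k) := by
  have hk : 2 * ω k < γ := hγ.self_of_nhds
  have hw : 0 < ω k := hpos k
  have hγ0 : 0 < γ := lt_trans (by positivity) hk
  obtain ⟨hb0, hb2⟩ := Omega_facts ω γ k hw hk (Ω k) (hΩ k)
  set b := Ω k with hbdef
  set w := ω k with hwdef
  set w' := deriv ω k with hw'def
  -- entries at k, for every real t
  have ent : ∀ t : ℝ,
      Ahat ω γ t k 1 1 = (Real.exp (-(γ * t) / 2) / b) *
          (-(γ / 2) * Real.sinh (b * t) + b * Real.cosh (b * t)) ∧
      Ahat ω γ t k 1 0 = (Real.exp (-(γ * t) / 2) / b) * Real.sinh (b * t) := by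
    intro t
    rw [Ahat_eq ω γ t k b hb0.ne' hb2]
    constructor
    · simp [Matrix.add_apply, Matrix.smul_apply, Matrix.one_apply]
      field_simp
      ring
    · simp [Matrix.add_apply, Matrix.smul_apply, Matrix.one_apply]
      field_simp
  refine ⟨fun t _ => ent t, ?_⟩
  -- derivative of Ω
  have hω' : HasDerivAt ω w' k := hdiff.hasDerivAt
  have hsq : Real.sqrt (1 - (2 * w / γ)^2) = 2 * b / γ := by
    have := hΩ k
    rw [← hbdef, ← hwdef] at this
    rw [this]
    field_simp
  have hgk : (0:ℝ) < 1 - (2 * w / γ)^2 := by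
    have h1' : 2 * w / γ < 1 := (div_lt_one hγ0).2 hk
    have h0 : 0 < 2 * w / γ := by positivity
    nlinarith
  have hΩd : HasDerivAt Ω (-(w * w') / b) k := by
    have hq : HasDerivAt (fun x => 2 * ω x / γ) (2 * w' / γ) k := (hω'.const_mul 2).div_const γ
    have hg : HasDerivAt (fun x => 1 - (2 * ω x / γ)^2)
        (-(2 * (2 * ω k / γ)^1 * (2 * w' / γ))) k := (hq.pow 2).const_sub 1
    have hs := hg.sqrt (ne_of_gt hgk)
    have hfin := hs.const_mul (γ/2)
    have hfun : (fun x => γ/2 * Real.sqrt (1 - (2 * ω x / γ)^2)) = Ω := by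
      funext x; exact (hΩ x).symm
    rw [hfun] at hfin
    refine hfin.congr_deriv ?_
    rw [hsq]
    field_simp
    ring
  -- derivative of the 1 0 entry in x, at k
  have hev : ∀ t : ℝ, (fun x => Real.exp (-(γ * t) / 2) * Real.sinh (Ω x * t) / Ω x)
      =ᶠ[nhds k] (fun x => Ahat ω γ t x 1 0) := by
    intro t
    filter_upwards [hγ] with x hx
    obtain ⟨hvx0, hvx2⟩ := Omega_facts ω γ x (hpos x) hx (Ω x) (hΩ x)
    rw [Ahat_eq ω γ t x (Ω x) hvx0.ne' hvx2]
    simp [Matrix.add_apply, Matrix.smul_apply, Matrix.one_apply]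
    ring
  have hderk : ∀ t : ℝ, deriv (fun x => Ahat ω γ t x 1 0) k =
      (Real.exp (-(γ * t) / 2) * (Real.cosh (b * t) * (-(w * w') / b * t)) * b
        - Real.exp (-(γ * t) / 2) * Real.sinh (b * t) * (-(w * w') / b)) / b^2 := by
    intro t
    have h1 : HasDerivAt (fun x => Ω x * t) (-(w * w') / b * t) k := hΩd.mul_const t
    have h2 : HasDerivAt (fun x => Real.sinh (Ω x * t))
        (Real.cosh (b * t) * (-(w * w') / b * t)) k := by
      have := h1.sinh
      rwa [← hbdef] at this
    have h3 := h2.const_mul (Real.exp (-(γ * t) / 2))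
    have h4 : HasDerivAt (fun x => Real.exp (-(γ * t) / 2) * Real.sinh (Ω x * t) / Ω x)
        ((Real.exp (-(γ * t) / 2) * (Real.cosh (b * t) * (-(w * w') / b * t)) * b
          - Real.exp (-(γ * t) / 2) * Real.sinh (b * t) * (-(w * w') / b)) / b^2) k := by
      have := h3.div hΩd hb0.ne'
      refine this.congr_deriv ?_
      rw [← hbdef]
    exact ((h4.congr_of_eventuallyEq (hev t).symm).deriv)
  -- the integrand as explicit exponential polynomial
  set K := (-(w * w') / b) / b^3 with hK
  have hpoint : ∀ t : ℝ,
      Ahat ω γ t k 1 1 * deriv (fun x => Ahat ω γ t x 1 0) k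
      = (K*(γ-2*b)/8 + (-(K*(γ-2*b)*b/8)) * t) * rexp (-((γ-2*b)*t))
        + ((-(K*γ/4)) + (K*b^2/2) * t) * rexp (-(γ*t))
        + (K*(γ+2*b)/8 + (K*(γ+2*b)*b/8) * t) * rexp (-((γ+2*b)*t)) := by
    intro t
    rw [(ent t).1, hderk t]
    set u := Real.exp (-(γ * t) / 2) with hu
    set v := Real.exp (b * t) with hv
    have hvne : v ≠ 0 := Real.exp_ne_zero _
    have hune : u ≠ 0 := Real.exp_ne_zero _
    have hs : Real.sinh (b*t) = (v - v⁻¹)/2 := by rw [Real.sinh_eq, hv, Real.exp_neg]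
    have hc : Real.cosh (b*t) = (v + v⁻¹)/2 := by rw [Real.cosh_eq, hv, Real.exp_neg]
    have E1 : rexp (-((γ-2*b)*t)) = u * u * (v * v) := by
      rw [hu, hv, ← Real.exp_add, ← Real.exp_add, ← Real.exp_add]; congr 1; ring
    have E2 : rexp (-(γ*t)) = u * u := by
      rw [hu, ← Real.exp_add]; congr 1; ring
    have E3 : rexp (-((γ+2*b)*t)) = u * u * (v⁻¹ * v⁻¹) := by
      rw [hu, hv, ← Real.exp_neg, ← Real.exp_add, ← Real.exp_add, ← Real.exp_add]
      congr 1; ring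
    rw [E1, E2, E3, hs, hc, hK]
    field_simp
    ring
  -- positivity of decay rates
  have hblt : b < γ/2 := by nlinarith
  have hp : 0 < γ - 2*b := by linarith
  have hq : 0 < γ + 2*b := by linarith
  -- compute the integral
  have I1 := integral_linexp_Ioi (γ-2*b) (K*(γ-2*b)/8) (-(K*(γ-2*b)*b/8)) hp
  have I2 := integral_linexp_Ioi γ (-(K*γ/4)) (K*b^2/2) hγ0
  have I3 := integral_linexp_Ioi (γ+2*b) (K*(γ+2*b)/8) (K*(γ+2*b)*b/8) hq
  have hint : ∫ t in Set.Ioi (0:ℝ),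
      Ahat ω γ t k 1 1 * deriv (fun x => Ahat ω γ t x 1 0) k
      = (K*(γ-2*b)/8)/(γ-2*b) + (-(K*(γ-2*b)*b/8))/(γ-2*b)^2
        + ((-(K*γ/4))/γ + (K*b^2/2)/γ^2)
        + ((K*(γ+2*b)/8)/(γ+2*b) + (K*(γ+2*b)*b/8)/(γ+2*b)^2) := by
    rw [MeasureTheory.integral_congr_ae (Filter.Eventually.of_forall hpoint)]
    have A := MeasureTheory.integral_add (I1.1.add I2.1) I3.1
    have B := MeasureTheory.integral_add I1.1 I2.1
    simp only [Pi.add_apply] at A B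
    rw [A, B, I1.2, I2.2, I3.2]
  rw [hint]
  have hwne : w ≠ 0 := hw.ne'
  have hbne : b ≠ 0 := hb0.ne'
  have h4 : (γ - 2*b) * (γ + 2*b) = 4*w^2 := by linear_combination (-4) * hb2
  have hS : K * (γ - 2 * b) / 8 / (γ - 2 * b) + -(K * (γ - 2 * b) * b / 8) / (γ - 2 * b) ^ 2 +
        (-(K * γ / 4) / γ + K * b ^ 2 / 2 / γ ^ 2) +
      (K * (γ + 2 * b) / 8 / (γ + 2 * b) + K * (γ + 2 * b) * b / 8 / (γ + 2 * b) ^ 2)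
      = K * (-2 * b^4 / (γ^2 * ((γ - 2*b) * (γ + 2*b)))) := by
    field_simp
    ring
  rw [hS, h4, hK]
  field_simp
  ring
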